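/- Two Gauss codes w and w' on n letters are orientedly equivalent if and only if proj^LC(w) = proj^LC(w'). Moreover proj^LC(w) is left canonical for every Gauss code w, and proj^LC(w) = w whenever w is left canonical; hence proj^LC induces a bijection between the set of oriented equivalence classes of Gauss codes on n letters and the set of left canonical Gauss codes on n letters. -/

import Mathlib

/-- A Gauss code on `n` letters: a bijection from the `2*n` positions to
letters paired with a side (`false` = L, `true` = R). -/
abbrev GaussCode (n : ℕ) := Fin (2 * n) ≃ Fin n × Bool

instance (n : ℕ) [NeZero n] : NeZero (2 * n) := ⟨by have := NeZero.ne n; omega⟩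

namespace GaussCode

variable {n : ℕ}

/-- `π_*(w)`: relabel the letters by the permutation `π`. -/
def permAct (π : Equiv.Perm (Fin n)) (w : GaussCode n) : GaussCode n :=
  w.trans (π.prodCongr (Equiv.refl Bool))

open Fin.NatCast in
/-- `shift[m](w)`: the code whose entry at position `i` is the entry of `w` at
position `i + m` (mod `2n`). -/
def shift [NeZero n] (m : ℕ) (w : GaussCode n) : GaussCode n :=
  (Equiv.addRight ((m : Fin (2 * n)))).trans w

/-- `rev(w)`: the code whose entry at position `i` is the entry of `w` at
position `2n - 1 - i`. -/
def rev (w : GaussCode n) : GaussCode n :=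
  (Fin.revPerm).trans w

/-- A Gauss code is left preferred if its `L`-entries appear in the order
`(1,L), (2,L), …, (n,L)` and its entry at position `0` is `(1,L)`. -/
def IsLeftPreferred [NeZero n] (w : GaussCode n) : Prop :=
  StrictMono (fun j : Fin n => w.symm (j, false)) ∧ w 0 = (0, false)

/-- `proj^LP(w)`: relabel letters in the order of appearance of their `L`-entries,
then rotate so that `(1,L)` is at position `0`. -/
def projLP [NeZero n] (w : GaussCode n) : GaussCode n :=
  let π : Equiv.Perm (Fin n) := (Tuple.sort (fun j : Fin n => w.symm (j, false)))⁻¹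
  let w' := permAct π w
  shift ((w'.symm ((0 : Fin n), false)).val) w'

/-- `shift^LP(w) := proj^LP(shift[1](w))`. -/
def shiftLP [NeZero n] (w : GaussCode n) : GaussCode n :=
  projLP (shift 1 w)

/-- `rev^LP(w) := proj^LP(rev(w))`. -/
def revLP [NeZero n] (w : GaussCode n) : GaussCode n :=
  projLP (rev w)

/-- The value of an entry in the order `(1,L) < (1,R) < (2,L) < (2,R) < …`. -/
def entryKey (e : Fin n × Bool) : ℕ :=
  2 * e.1.val + (if e.2 then 1 else 0)

/-- Lexicographic (strict) order on Gauss codes, comparing entries position by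
position in the order `(1,L) < (1,R) < (2,L) < (2,R) < …`. -/
def lexLt (w w' : GaussCode n) : Prop :=
  ∃ i : Fin (2 * n), (∀ k, k < i → w k = w' k) ∧ entryKey (w i) < entryKey (w' i)

/-- Lexicographic order on Gauss codes. -/
def lexLe (w w' : GaussCode n) : Prop :=
  w = w' ∨ lexLt w w'

/-- A left preferred Gauss code is left canonical if it is the smallest element
of its `shift^LP`-orbit `{w, shift^LP(w), …, (shift^LP)^{n-1}(w)}`. -/
def IsLeftCanonical [NeZero n] (w : GaussCode n) : Prop :=
  IsLeftPreferred w ∧ ∀ k < n, lexLe w (shiftLP^[k] w)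

/-- `proj^LC(w)`: the smallest element of the `shift^LP`-orbit of `proj^LP(w)`. -/
noncomputable def projLC [NeZero n] (w : GaussCode n) : GaussCode n :=
  letI := Classical.propDecidable
  if h : ∃ v : GaussCode n, (∃ k < n, v = shiftLP^[k] (projLP w)) ∧
      ∀ k < n, lexLe v (shiftLP^[k] (projLP w))
  then h.choose else projLP w

/-- `rev^LC(w) := proj^LC(rev(w))`. -/
noncomputable def revLC [NeZero n] (w : GaussCode n) : GaussCode n :=
  projLC (rev w)

/-- Oriented equivalence of Gauss codes: `w' = shift[m](π_*(w))` for some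
permutation `π` and integer `m`. -/
def OrientedEquiv [NeZero n] (w w' : GaussCode n) : Prop :=
  ∃ (π : Equiv.Perm (Fin n)) (m : ℕ), w' = shift m (permAct π w)

/-- Unoriented equivalence: `w` is orientedly equivalent to `w'` or to `rev(w')`. -/
def UnorientedEquiv [NeZero n] (w w' : GaussCode n) : Prop :=
  OrientedEquiv w w' ∨ OrientedEquiv w (rev w')

/-- A Gauss code is 1-reducible if two cyclically adjacent entries share the same letter. -/
def OneReducible [NeZero n] (w : GaussCode n) : Prop :=
  ∃ i : Fin (2 * n), (w i).1 = (w (i + 1)).1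

/-- A Gauss code is 2-reducible (cyclically, with `L = false`, `R = true`). -/
def TwoReducible [NeZero n] (w : GaussCode n) : Prop :=
  ∃ (i i' : Fin (2 * n)) (j k : Fin n), j ≠ k ∧
    ((w i = (j, false) ∧ w (i + 1) = (k, true) ∧
        w i' = (j, true) ∧ w (i' + 1) = (k, false)) ∨
     (w i = (j, false) ∧ w (i + 1) = (k, true) ∧
        w i' = (k, false) ∧ w (i' + 1) = (j, true)) ∨
     (w i = (j, true) ∧ w (i + 1) = (k, false) ∧
        w i' = (k, true) ∧ w (i' + 1) = (j, false)))

/-- A Gauss code is minimal if it is neither 1-reducible nor 2-reducible. -/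
def IsMinimal [NeZero n] (w : GaussCode n) : Prop :=
  ¬ OneReducible w ∧ ¬ TwoReducible w

/-- `σ_w`: the involution of positions sending each position to the unique other
position carrying the same letter. -/
def sigmaMap (w : GaussCode n) : Fin (2 * n) → Fin (2 * n) :=
  fun i => w.symm ((w i).1, !(w i).2)

/-- `h_w`: the side (`false` = L, `true` = R) of the entry at each position. -/
def hMap (w : GaussCode n) : Fin (2 * n) → Bool :=
  fun i => (w i).2

end GaussCode


namespace GaussCode

set_option linter.unusedSectionVars false

open Fin.NatCast

variable {n : ℕ}

@[simp] lemma permAct_apply (π : Equiv.Perm (Fin n)) (w : GaussCode n) (i) :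
    permAct π w i = (π (w i).1, (w i).2) := rfl

@[simp] lemma permAct_symm_apply (π : Equiv.Perm (Fin n)) (w : GaussCode n) (j s) :
    (permAct π w).symm (j, s) = w.symm (π⁻¹ j, s) := rfl

@[simp] lemma shift_apply [NeZero n] (m : ℕ) (w : GaussCode n) (i) :
    shift m w i = w (i + (m : Fin (2*n))) := rfl

@[simp] lemma shift_symm_apply [NeZero n] (m : ℕ) (w : GaussCode n) (e) :
    (shift m w).symm e = w.symm e - (m : Fin (2*n)) := by
  simp [shift, Equiv.symm_trans_apply, Equiv.addRight, sub_eq_add_neg]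

lemma shift_shift [NeZero n] (a b : ℕ) (w : GaussCode n) :
    shift a (shift b w) = shift (b + a) w :=
  Equiv.ext fun i => by simp [add_assoc, Nat.cast_add]; exact add_comm _ _

@[simp] lemma shift_zero [NeZero n] (w : GaussCode n) : shift 0 w = w :=
  Equiv.ext fun i => by simp

lemma shift_mod [NeZero n] (m : ℕ) (w : GaussCode n) :
    shift m w = shift (m % (2*n)) w := by
  have : ((m : Fin (2*n))) = ((m % (2*n) : ℕ) : Fin (2*n)) := by
    simp [Fin.ext_iff, Fin.val_natCast, Nat.mod_mod_of_dvd _ dvd_rfl]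
  refine Equiv.ext fun i => ?_
  rw [shift_apply, shift_apply, this]

@[simp] lemma permAct_one [NeZero n] (w : GaussCode n) : permAct 1 w = w :=
  Equiv.ext fun i => by simp

lemma permAct_permAct (π ρ : Equiv.Perm (Fin n)) (w : GaussCode n) :
    permAct π (permAct ρ w) = permAct (π * ρ) w :=
  Equiv.ext fun i => by simp

lemma shift_permAct [NeZero n] (m : ℕ) (π : Equiv.Perm (Fin n)) (w : GaussCode n) :
    shift m (permAct π w) = permAct π (shift m w) :=
  Equiv.ext fun i => by simp


variable [NeZero n]
/-! ### relabel and projLP structure -/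

variable [NeZero n]

def sortPerm (w : GaussCode n) : Equiv.Perm (Fin n) :=
  (Tuple.sort (fun j : Fin n => w.symm (j, false)))⁻¹

def relabel (w : GaussCode n) : GaussCode n := permAct (sortPerm w) w

lemma projLP_eq (w : GaussCode n) :
    projLP w = shift ((relabel w).symm (0, false)).val (relabel w) := rfl

lemma symm_false_injective (w : GaussCode n) :
    Function.Injective (fun j : Fin n => w.symm (j, false)) := fun a b h => by
  have := w.symm.injective h
  exact congrArg Prod.fst this

lemma relabel_symm (w : GaussCode n) (j : Fin n) :
    (relabel w).symm (j, false) = w.symm (Tuple.sort (fun j : Fin n => w.symm (j, false)) j, false) := by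
  simp [relabel, sortPerm]

lemma relabel_strictMono (w : GaussCode n) :
    StrictMono (fun j : Fin n => (relabel w).symm (j, false)) := by
  have h1 : (fun j : Fin n => (relabel w).symm (j, false)) =
      (fun j : Fin n => w.symm (j, false)) ∘ (Tuple.sort (fun j : Fin n => w.symm (j, false))) := by
    funext j; exact relabel_symm w j
  rw [h1]
  exact (Tuple.monotone_sort _).strictMono_of_injective
    ((symm_false_injective w).comp (Equiv.injective _))

/-- Uniqueness of the sorting permutation for injective tuples. -/
lemma perm_eq_of_strictMono {f : Fin n → Fin (2*n)} (hf : Function.Injective f)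
    (σ τ : Equiv.Perm (Fin n)) (hσ : StrictMono (f ∘ σ)) (hτ : StrictMono (f ∘ τ)) :
    σ = τ := by
  have h := Tuple.unique_monotone (f := f) hσ.monotone hτ.monotone
  ext x
  exact congrArg Fin.val (hf (congrFun h x))

lemma relabel_eq_of_strictMono {w : GaussCode n} (π : Equiv.Perm (Fin n))
    (h : StrictMono (fun j : Fin n => (permAct π w).symm (j, false))) :
    permAct π w = relabel w := by
  have h2 : StrictMono ((fun j : Fin n => w.symm (j, false)) ∘ (π⁻¹ : Equiv.Perm (Fin n))) := by
    exact h
  have h3 : StrictMono ((fun j : Fin n => w.symm (j, false)) ∘ ((sortPerm w)⁻¹ : Equiv.Perm (Fin n))) := by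
    exact relabel_strictMono w
  have := perm_eq_of_strictMono (symm_false_injective w) _ _ h2 h3
  have hπ : π = sortPerm w := by
    have := congrArg (·⁻¹) this; simpa using this
  rw [hπ]; rfl


def m0 (w : GaussCode n) : ℕ := ((relabel w).symm (0, false)).val

lemma projLP_eq' (w : GaussCode n) : projLP w = shift (m0 w) (relabel w) := rfl

lemma m0_le (w : GaussCode n) (j : Fin n) : m0 w ≤ (w.symm (j, false)).val := by
  have h := (relabel_strictMono w).monotone (a := 0) (b := sortPerm w j) (Fin.zero_le _)
  have h2 : (relabel w).symm (sortPerm w j, false) = w.symm (j, false) := by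
    simp [relabel]
  rw [h2] at h
  exact h

lemma m0_exists (w : GaussCode n) : ∃ j, (w.symm (j, false)).val = m0 w := by
  refine ⟨(sortPerm w)⁻¹ 0, ?_⟩
  have : (relabel w).symm (0, false) = w.symm ((sortPerm w)⁻¹ 0, false) := by
    simp [relabel]
  rw [m0, this]

lemma m0_lt (w : GaussCode n) : m0 w < 2 * n := by
  obtain ⟨j, hj⟩ := m0_exists w
  rw [← hj]; exact (w.symm (j, false)).isLt

lemma projLP_isLeftPreferred (w : GaussCode n) : IsLeftPreferred (projLP w) := by
  constructor
  · intro a b hab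
    show (projLP w).symm (a, false) < (projLP w).symm (b, false)
    have hm : ((m0 w : ℕ) : Fin (2*n)) = (relabel w).symm (0, false) := by
      simp [m0, Fin.cast_val_eq_self]
    have key : ∀ j : Fin n, (projLP w).symm (j, false) =
        (relabel w).symm (j, false) - (relabel w).symm (0, false) := by
      intro j
      rw [projLP_eq', shift_symm_apply, hm]
    rw [key a, key b]
    have h0a : (relabel w).symm (0, false) ≤ (relabel w).symm (a, false) :=
      (relabel_strictMono w).monotone (Fin.zero_le a)
    have h0b : (relabel w).symm (0, false) ≤ (relabel w).symm (b, false) :=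
      (relabel_strictMono w).monotone (Fin.zero_le b)
    have hab' : (relabel w).symm (a, false) < (relabel w).symm (b, false) :=
      relabel_strictMono w hab
    rw [Fin.lt_def]
    rw [Fin.coe_sub_iff_le.2 h0a, Fin.coe_sub_iff_le.2 h0b]
    omega
  · have hm : ((m0 w : ℕ) : Fin (2*n)) = (relabel w).symm (0, false) := by
      simp [m0, Fin.cast_val_eq_self]
    rw [projLP_eq', shift_apply, hm, zero_add, Equiv.apply_symm_apply]

/-- Uniqueness: a left preferred relabeling of `u` equals `projLP u` when no shift occurs. -/
lemma eq_projLP_of_permAct {v u : GaussCode n} (hv : IsLeftPreferred v)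
    (π : Equiv.Perm (Fin n)) (h : v = permAct π u) : v = projLP u := by
  have h1 : permAct π u = relabel u := by
    apply relabel_eq_of_strictMono
    rw [← h]; exact hv.1
  have h2 : v = relabel u := h.trans h1
  have h3 : m0 u = 0 := by
    have : (relabel u).symm (0, false) = 0 := by
      rw [← h2, (Equiv.symm_apply_eq v).2 hv.2.symm]
    simp [m0, this]
  rw [projLP_eq', h3, shift_zero, h2]

lemma projLP_of_isLeftPreferred {w : GaussCode n} (hw : IsLeftPreferred w) :
    projLP w = w :=
  (eq_projLP_of_permAct hw 1 (permAct_one w).symm).symm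

lemma eq_projLP_of_shift_permAct {v u : GaussCode n} (hv : IsLeftPreferred v)
    (π : Equiv.Perm (Fin n)) (m : ℕ) (h : v = shift m (permAct π u)) :
    v = projLP (shift m u) := by
  rw [shift_permAct] at h
  exact eq_projLP_of_permAct hv π h

lemma relabel_permAct (π : Equiv.Perm (Fin n)) (w : GaussCode n) :
    relabel (permAct π w) = relabel w := by
  have : relabel (permAct π w) = permAct (sortPerm (permAct π w) * π) w := by
    rw [relabel, permAct_permAct]
  rw [this]
  apply relabel_eq_of_strictMono
  rw [← this]
  exact relabel_strictMono (permAct π w)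

lemma projLP_permAct (π : Equiv.Perm (Fin n)) (w : GaussCode n) :
    projLP (permAct π w) = projLP w := by
  have h := relabel_permAct π w
  rw [projLP_eq', projLP_eq', m0, m0, h]


lemma one_lt_two_mul : 1 < 2 * n := by have := NeZero.ne n; omega

lemma val_one_fin : ((1 : ℕ) : Fin (2*n)).val = 1 := by
  rw [Fin.val_natCast, Nat.mod_eq_of_lt one_lt_two_mul]

/-- If position 0 carries an `R` entry, shifting by 1 does not change `projLP`. -/
lemma projLP_shift_one_of_R {u : GaussCode n} (h : (u 0).2 = true) :
    projLP (shift 1 u) = projLP u := by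
  have hpos : ∀ j : Fin n, 1 ≤ (u.symm (j, false)).val := by
    intro j
    by_contra hc
    push_neg at hc
    have h0 : u.symm (j, false) = 0 := by
      apply Fin.ext
      simp only [Fin.val_zero]
      omega
    have : u 0 = (j, false) := by rw [← h0, Equiv.apply_symm_apply]
    rw [this] at h; simp at h
  have hone : ∀ j : Fin n, ((1:ℕ) : Fin (2*n)) ≤ u.symm (j, false) := by
    intro j; rw [Fin.le_def, val_one_fin]; exact hpos j
  have hsubval : ∀ j : Fin n, ((shift 1 u).symm (j, false)).val = (u.symm (j, false)).val - 1 := by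
    intro j
    rw [shift_symm_apply, Fin.coe_sub_iff_le.2 (hone j), val_one_fin]
  -- the sort permutation is unchanged
  have hperm : permAct (sortPerm u) (shift 1 u) = relabel (shift 1 u) := by
    apply relabel_eq_of_strictMono
    intro a b hab
    show (shift 1 u).symm ((sortPerm u)⁻¹ a, false) < (shift 1 u).symm ((sortPerm u)⁻¹ b, false)
    have hmono : u.symm ((sortPerm u)⁻¹ a, false) < u.symm ((sortPerm u)⁻¹ b, false) := by
      have := relabel_strictMono u hab
      simpa [relabel] using this
    rw [Fin.lt_def, hsubval, hsubval]
    have h1 := hpos ((sortPerm u)⁻¹ a)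
    have h2 := hpos ((sortPerm u)⁻¹ b)
    rw [Fin.lt_def] at hmono
    omega
  have hrel : relabel (shift 1 u) = shift 1 (relabel u) := by
    rw [← hperm, relabel, ← shift_permAct]
  -- m0 decreases by one
  have hm0pos : 1 ≤ m0 u := by
    obtain ⟨j, hj⟩ := m0_exists u
    rw [← hj]; exact hpos j
  have hm0 : m0 (shift 1 u) = m0 u - 1 := by
    rw [m0, hrel, shift_symm_apply]
    have : ((1:ℕ) : Fin (2*n)) ≤ (relabel u).symm (0, false) := by
      rw [Fin.le_def, val_one_fin]
      obtain ⟨j, hj⟩ := m0_exists u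
      have := hpos j; rw [hj] at this
      exact this
    rw [Fin.coe_sub_iff_le.2 this, val_one_fin]; rfl
  rw [projLP_eq', projLP_eq', hm0, hrel, shift_shift]
  congr 1
  omega

/-- If position 0 carries an `L` entry, shifting by 1 corresponds to `shiftLP`. -/
lemma projLP_shift_one_of_L {u : GaussCode n} (h : (u 0).2 = false) :
    projLP (shift 1 u) = shiftLP (projLP u) := by
  have h0 : u.symm ((u 0).1, false) = 0 := by
    apply (Equiv.symm_apply_eq u).2
    rw [← h]
  have hm : m0 u = 0 := by
    have := m0_le u (u 0).1
    rw [h0] at this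
    simpa using this
  have hrel : projLP u = relabel u := by rw [projLP_eq', hm, shift_zero]
  rw [shiftLP, hrel, relabel, shift_permAct, projLP_permAct]

open Finset in
def cnt (w : GaussCode n) (m : ℕ) : ℕ :=
  (Finset.univ.filter (fun i : Fin (2*n) => i.val < m ∧ (w i).2 = false)).card

lemma cnt_zero (w : GaussCode n) : cnt w 0 = 0 := by
  simp [cnt]

lemma cnt_succ (w : GaussCode n) (m : ℕ) (hm : m < 2*n) :
    cnt w (m+1) = cnt w m + (if (w ⟨m, hm⟩).2 = false then 1 else 0) := by
  classical
  have hsplit : (Finset.univ.filter (fun i : Fin (2*n) => i.val < m+1 ∧ (w i).2 = false)) =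
      (Finset.univ.filter (fun i : Fin (2*n) => i.val < m ∧ (w i).2 = false)) ∪
      (Finset.univ.filter (fun i : Fin (2*n) => i.val = m ∧ (w i).2 = false)) := by
    rw [← Finset.filter_or]
    apply Finset.filter_congr
    intro i _
    constructor
    · rintro ⟨h1, h2⟩
      rcases Nat.lt_succ_iff_lt_or_eq.1 h1 with h | h
      · exact Or.inl ⟨h, h2⟩
      · exact Or.inr ⟨h, h2⟩
    · rintro (⟨h1, h2⟩ | ⟨h1, h2⟩)
      · exact ⟨by omega, h2⟩
      · exact ⟨by omega, h2⟩
  have hdisj : Disjoint (Finset.univ.filter (fun i : Fin (2*n) => i.val < m ∧ (w i).2 = false))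
      (Finset.univ.filter (fun i : Fin (2*n) => i.val = m ∧ (w i).2 = false)) := by
    rw [Finset.disjoint_filter]
    rintro i _ ⟨h1, _⟩ ⟨h2, _⟩
    omega
  have hlast : (Finset.univ.filter (fun i : Fin (2*n) => i.val = m ∧ (w i).2 = false)) =
      if (w ⟨m, hm⟩).2 = false then {(⟨m, hm⟩ : Fin (2*n))} else ∅ := by
    split_ifs with hc
    · ext i
      simp only [Finset.mem_filter, Finset.mem_univ, true_and, Finset.mem_singleton]
      constructor
      · rintro ⟨h1, _⟩; exact Fin.ext h1
      · rintro rfl; exact ⟨rfl, hc⟩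
    · ext i
      simp only [Finset.mem_filter, Finset.mem_univ, true_and, Finset.notMem_empty, iff_false]
      rintro ⟨h1, h2⟩
      exact hc (by rwa [show (⟨m, hm⟩ : Fin (2*n)) = i from (Fin.ext h1.symm)])
  rw [cnt, cnt, hsplit, Finset.card_union_of_disjoint hdisj, hlast]
  split_ifs <;> simp

lemma cnt_top (w : GaussCode n) : cnt w (2*n) = n := by
  classical
  have h1 : (Finset.univ.filter (fun i : Fin (2*n) => i.val < 2*n ∧ (w i).2 = false)) =
      (Finset.univ.filter (fun i : Fin (2*n) => (w i).2 = false)) := by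
    apply Finset.filter_congr
    intro i _
    simp [i.isLt]
  rw [cnt, h1]
  have hb := Finset.card_bij'
    (s := Finset.univ.filter fun i : Fin (2*n) => (w i).2 = false)
    (t := (Finset.univ : Finset (Fin n)))
    (i := fun i _ => (w i).1) (j := fun j _ => w.symm (j, false))
    (fun a ha => Finset.mem_univ _)
    (fun a ha => by
      simp only [Finset.mem_filter, Finset.mem_univ, true_and]
      rw [Equiv.apply_symm_apply])
    (fun a ha => by
      simp only [Finset.mem_filter, Finset.mem_univ, true_and] at ha
      show w.symm ((w a).1, false) = a
      have : ((w a).1, false) = w a := Prod.ext rfl ha.symm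
      rw [this, Equiv.symm_apply_apply])
    (fun a ha => by
      show (w (w.symm (a, false))).1 = a
      rw [Equiv.apply_symm_apply])
  simpa using hb

lemma iterate_cnt (w : GaussCode n) (hw : IsLeftPreferred w) :
    ∀ m, m ≤ 2*n → shiftLP^[cnt w m] w = projLP (shift m w) := by
  intro m
  induction m with
  | zero =>
    intro _
    rw [cnt_zero, Function.iterate_zero, shift_zero, projLP_of_isLeftPreferred hw]
    rfl
  | succ m ih =>
    intro hm1
    have hmlt : m < 2*n := by omega
    have ihm := ih (by omega)
    have hsh : shift (m+1) w = shift 1 (shift m w) := (shift_shift 1 m w).symm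
    have hval : (shift m w) 0 = w ⟨m, hmlt⟩ := by
      rw [shift_apply, zero_add]
      congr 1
      apply Fin.ext
      rw [Fin.val_natCast, Nat.mod_eq_of_lt hmlt]
    rw [cnt_succ w m hmlt]
    rcases hLR : (w ⟨m, hmlt⟩).2 with _ | _
    · rw [if_pos rfl, Function.iterate_succ_apply', ihm, hsh,
        projLP_shift_one_of_L (by rw [hval]; exact hLR)]
    · rw [if_neg (by simp [hLR]), Nat.add_zero, hsh,
        projLP_shift_one_of_R (by rw [hval]; exact hLR), ihm]

lemma shiftLP_iterate_n {w : GaussCode n} (hw : IsLeftPreferred w) :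
    shiftLP^[n] w = w := by
  have := iterate_cnt w hw (2*n) le_rfl
  rw [cnt_top] at this
  rw [this, shift_mod, Nat.mod_self, shift_zero, projLP_of_isLeftPreferred hw]

lemma shiftLP_iterate_mod {w : GaussCode n} (hw : IsLeftPreferred w) (k : ℕ) :
    shiftLP^[k] w = shiftLP^[k % n] w := by
  conv_lhs => rw [← Nat.mod_add_div k n, Function.iterate_add_apply]
  congr 1
  induction (k / n) with
  | zero => simp
  | succ q ihq =>
    rw [Nat.mul_succ, Function.iterate_add_apply, shiftLP_iterate_n hw, ihq]


/-! ### original definitions -/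







/-! ### oriented equivalence -/

lemma oe_refl (w : GaussCode n) : OrientedEquiv w w :=
  ⟨1, 0, by rw [permAct_one, shift_zero]⟩

lemma oe_symm {w w' : GaussCode n} (h : OrientedEquiv w w') : OrientedEquiv w' w := by
  obtain ⟨π, m, rfl⟩ := h
  refine ⟨π⁻¹, 2*n - m % (2*n), ?_⟩
  rw [shift_permAct m π w, permAct_permAct, inv_mul_cancel, permAct_one, shift_shift]
  have hmod : (m + (2*n - m % (2*n))) % (2*n) = 0 := by
    have h1 : m % (2*n) < 2*n := Nat.mod_lt _ (by have := NeZero.ne n; omega)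
    have h2 := Nat.mod_add_div m (2*n)
    have h3 : m + (2*n - m % (2*n)) = (2*n) * (m / (2*n)) + 2*n := by omega
    have h4 : (2*n) * (m / (2*n)) + 2*n = (2*n) * (m / (2*n) + 1) := by ring
    rw [h3, h4, Nat.mul_mod_right]
  rw [shift_mod, hmod, shift_zero]

lemma oe_trans {w w' w'' : GaussCode n} (h : OrientedEquiv w w')
    (h' : OrientedEquiv w' w'') : OrientedEquiv w w'' := by
  obtain ⟨π, m, rfl⟩ := h
  obtain ⟨π', m', rfl⟩ := h'
  refine ⟨π' * π, m + m', ?_⟩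
  rw [shift_permAct m π w, permAct_permAct, shift_permAct m' (π' * π), shift_shift,
    shift_permAct (m + m')]

lemma oe_shift (w : GaussCode n) (m : ℕ) : OrientedEquiv w (shift m w) :=
  ⟨1, m, by rw [permAct_one]⟩

lemma oe_projLP (w : GaussCode n) : OrientedEquiv w (projLP w) :=
  ⟨sortPerm w, m0 w, rfl⟩

lemma oe_shiftLP (w : GaussCode n) : OrientedEquiv w (shiftLP w) :=
  oe_trans (oe_shift w 1) (oe_projLP (shift 1 w))

lemma oe_iterate (w : GaussCode n) (k : ℕ) : OrientedEquiv w (shiftLP^[k] w) := by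
  induction k with
  | zero => exact oe_refl w
  | succ k ih =>
    rw [Function.iterate_succ_apply']
    exact oe_trans ih (oe_shiftLP _)

lemma orbit_of_oe {w w' : GaussCode n} (hw : IsLeftPreferred w) (hw' : IsLeftPreferred w')
    (h : OrientedEquiv w w') : ∃ k < n, w' = shiftLP^[k] w := by
  obtain ⟨π, m, hm⟩ := h
  have h1 : w' = projLP (shift m w) := eq_projLP_of_shift_permAct hw' π m hm
  have h2 : projLP (shift m w) = projLP (shift (m % (2*n)) w) := by rw [← shift_mod]
  have hlt : m % (2*n) ≤ 2*n := le_of_lt (Nat.mod_lt _ (by have := NeZero.ne n; omega))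
  have h3 := iterate_cnt w hw (m % (2*n)) hlt
  refine ⟨cnt w (m % (2*n)) % n, Nat.mod_lt _ (NeZero.pos n), ?_⟩
  rw [h1, h2, ← h3, shiftLP_iterate_mod hw]

lemma isLeftPreferred_iterate {w : GaussCode n} (hw : IsLeftPreferred w) (k : ℕ) :
    IsLeftPreferred (shiftLP^[k] w) := by
  induction k with
  | zero => exact hw
  | succ k ih =>
    rw [Function.iterate_succ_apply']
    exact projLP_isLeftPreferred _

/-! ### lexicographic order -/

noncomputable instance lexPiLinearOrder : LinearOrder (Lex (Fin (2*n) → ℕ)) :=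
  @Pi.Lex.linearOrder (Fin (2*n)) (fun _ => ℕ) _
    (inferInstanceAs (WellFoundedLT (Fin (2*n)))) _

noncomputable def keyF (w : GaussCode n) : Lex (Fin (2*n) → ℕ) :=
  toLex (fun i => entryKey (w i))

lemma entryKey_inj {e e' : Fin n × Bool} (h : entryKey e = entryKey e') : e = e' := by
  obtain ⟨a, sa⟩ := e; obtain ⟨b, sb⟩ := e'
  unfold entryKey at h
  simp only at h
  have hab : a.val = b.val ∧ sa = sb := by
    cases sa <;> cases sb <;> simp at h ⊢ <;> omega
  exact Prod.ext (Fin.ext hab.1) hab.2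

lemma keyF_inj {w w' : GaussCode n} (h : keyF w = keyF w') : w = w' := by
  refine Equiv.ext fun i => ?_
  have := congrFun (congrArg ofLex h) i
  exact entryKey_inj this

lemma lexLt_iff (w w' : GaussCode n) : lexLt w w' ↔ keyF w < keyF w' := by
  have hdef : (keyF w < keyF w') = Pi.Lex (· < ·) (@fun _ => (· < ·))
      (fun i => entryKey (w i)) (fun i => entryKey (w' i)) := rfl
  rw [hdef]
  unfold Pi.Lex
  constructor
  · rintro ⟨i, h1, h2⟩
    exact ⟨i, fun j hj => congrArg entryKey (h1 j hj), h2⟩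
  · rintro ⟨i, h1, h2⟩
    exact ⟨i, fun k hk => entryKey_inj (h1 k hk), h2⟩

lemma lexLe_iff (w w' : GaussCode n) : lexLe w w' ↔ keyF w ≤ keyF w' := by
  rw [le_iff_lt_or_eq, lexLe, or_comm]
  constructor
  · rintro (h | h)
    · exact Or.inl ((lexLt_iff w w').1 h)
    · exact Or.inr (by rw [h])
  · rintro (h | h)
    · exact Or.inl ((lexLt_iff w w').2 h)
    · exact Or.inr (keyF_inj h)

/-! ### the minimum of the orbit -/

lemma exists_min (w : GaussCode n) :
    ∃ v : GaussCode n, (∃ k < n, v = shiftLP^[k] (projLP w)) ∧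
      ∀ k < n, lexLe v (shiftLP^[k] (projLP w)) := by
  classical
  set S : Finset (GaussCode n) := (Finset.range n).image (fun k => shiftLP^[k] (projLP w)) with hSdef
  have hS : S.Nonempty := by
    refine ⟨projLP w, ?_⟩
    rw [hSdef, Finset.mem_image]
    exact ⟨0, Finset.mem_range.2 (NeZero.pos n), rfl⟩
  obtain ⟨v, hvS, hmin⟩ := Finset.exists_min_image S (fun v => keyF v) hS
  rw [hSdef, Finset.mem_image] at hvS
  obtain ⟨k, hk, hvk⟩ := hvS
  refine ⟨v, ⟨k, Finset.mem_range.1 hk, hvk.symm⟩, fun k' hk' => ?_⟩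
  have hmem : shiftLP^[k'] (projLP w) ∈ S := by
    rw [hSdef, Finset.mem_image]
    exact ⟨k', Finset.mem_range.2 hk', rfl⟩
  exact (lexLe_iff _ _).2 (hmin _ hmem)

lemma min_eq {u v v' : GaussCode n}
    (h1 : ∃ k < n, v = shiftLP^[k] (projLP u)) (h2 : ∀ k < n, lexLe v (shiftLP^[k] (projLP u)))
    (h1' : ∃ k < n, v' = shiftLP^[k] (projLP u))
    (h2' : ∀ k < n, lexLe v' (shiftLP^[k] (projLP u))) : v = v' := by
  obtain ⟨k, hk, hkeq⟩ := h1
  obtain ⟨k', hk', hkeq'⟩ := h1'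
  have le1 : keyF v ≤ keyF v' := (lexLe_iff _ _).1 (hkeq' ▸ h2 k' hk')
  have le2 : keyF v' ≤ keyF v := (lexLe_iff _ _).1 (hkeq ▸ h2' k hk)
  exact keyF_inj (le_antisymm le1 le2)

lemma projLC_spec (w : GaussCode n) :
    (∃ k < n, projLC w = shiftLP^[k] (projLP w)) ∧
      ∀ k < n, lexLe (projLC w) (shiftLP^[k] (projLP w)) := by
  have hex := exists_min w
  unfold projLC
  rw [dif_pos hex]
  exact hex.choose_spec

/-! ### transfer of orbits along oriented equivalence -/

lemma orbit_subset {w w' : GaussCode n} (h : OrientedEquiv w w') :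
    ∀ k < n, ∃ k' < n, shiftLP^[k] (projLP w') = shiftLP^[k'] (projLP w) := by
  have hlpw : IsLeftPreferred (projLP w) := projLP_isLeftPreferred w
  have hlpw' : IsLeftPreferred (projLP w') := projLP_isLeftPreferred w'
  have hoe : OrientedEquiv (projLP w) (projLP w') :=
    oe_trans (oe_symm (oe_projLP w)) (oe_trans h (oe_projLP w'))
  obtain ⟨k₀, hk₀, hk0eq⟩ := orbit_of_oe hlpw hlpw' hoe
  intro k hk
  refine ⟨(k + k₀) % n, Nat.mod_lt _ (NeZero.pos n), ?_⟩
  rw [hk0eq, ← Function.iterate_add_apply, shiftLP_iterate_mod hlpw]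

lemma projLC_eq_of_oe {w w' : GaussCode n} (h : OrientedEquiv w w') :
    projLC w = projLC w' := by
  have hs := orbit_subset h
  have hs' := orbit_subset (oe_symm h)
  obtain ⟨⟨k, hk, hkeq⟩, hmin⟩ := projLC_spec w
  obtain ⟨h1', hmin'⟩ := projLC_spec w'
  refine min_eq (u := w') ?_ ?_ h1' hmin'
  · obtain ⟨j, hj, hjeq⟩ := hs' k hk
    exact ⟨j, hj, hkeq.trans hjeq⟩
  · intro j hj
    obtain ⟨j', hj', hjeq⟩ := hs j hj
    rw [hjeq]
    exact hmin j' hj'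

lemma oe_projLC (w : GaussCode n) : OrientedEquiv w (projLC w) := by
  obtain ⟨⟨k, hk, hkeq⟩, _⟩ := projLC_spec w
  rw [hkeq]
  exact oe_trans (oe_projLP w) (oe_iterate (projLP w) k)

lemma isLeftCanonical_projLC (w : GaussCode n) : IsLeftCanonical (projLC w) := by
  obtain ⟨⟨k₀, hk₀, hkeq⟩, hmin⟩ := projLC_spec w
  have hlp : IsLeftPreferred (projLP w) := projLP_isLeftPreferred w
  constructor
  · rw [hkeq]; exact isLeftPreferred_iterate hlp k₀
  · intro k hk
    have hstep : shiftLP^[k] (projLC w) = shiftLP^[(k + k₀) % n] (projLP w) := by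
      rw [hkeq, ← Function.iterate_add_apply, shiftLP_iterate_mod hlp]
    rw [hstep]
    exact hmin _ (Nat.mod_lt _ (NeZero.pos n))

lemma projLC_of_isLeftCanonical {w : GaussCode n} (hw : IsLeftCanonical w) :
    projLC w = w := by
  have hlp : projLP w = w := projLP_of_isLeftPreferred hw.1
  obtain ⟨h1, h2⟩ := projLC_spec w
  refine min_eq (u := w) h1 h2 ⟨0, NeZero.pos n, by rw [hlp]; simp⟩ ?_
  intro k hk
  rw [hlp]
  exact hw.2 k hk


end GaussCode

open GaussCode in
/-- oriented equivalence is detected by `proj^LC`; moreover `proj^LC`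
always produces a left canonical code and fixes left canonical codes, hence induces
a bijection between oriented equivalence classes and left canonical Gauss codes. -/
theorem stmt9 (n : ℕ) [NeZero n] :
    (∀ w w' : GaussCode n, OrientedEquiv w w' ↔ projLC w = projLC w') ∧
    (∀ w : GaussCode n, IsLeftCanonical (projLC w)) ∧
    (∀ w : GaussCode n, IsLeftCanonical w → projLC w = w) := by
  refine ⟨fun w w' => ⟨projLC_eq_of_oe, fun h => ?_⟩, isLeftCanonical_projLC,
    fun w => projLC_of_isLeftCanonical⟩
  exact oe_trans (oe_projLC w) (h ▸ oe_symm (oe_projLC w'))
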